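/- Let μ₁ > μ₂, δ := μ₁ − μ₂, σ₁, σ₂ > 0, and let N₀ ≥ 2 and T ≥ 2N₀ be integers. Then for every integer n₁ with N₀ ≤ n₁ ≤ T − N₀, 1 − Φ( δ / √( σ₁²/n₁ + σ₂²/(T−n₁) ) ) ≥ 1 − Φ( δ√T / (σ₁ + σ₂) ). (This is the key pointwise bound behind the result that no variance-driven algorithm with final allocation counts N₁ + N₂ = T, each at least N₀, can have probability of false selection below 1 − Φ(δ√T/(σ₁+σ₂)).) -/

import Mathlib

open MeasureTheory ProbabilityTheory Real

/-- The standard normal cumulative distribution function Φ. -/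
noncomputable def stdNormalCDF (x : ℝ) : ℝ :=
  ((gaussianReal 0 1) (Set.Iic x)).toReal

lemma stdNormalCDF_mono {x y : ℝ} (h : x ≤ y) : stdNormalCDF x ≤ stdNormalCDF y := by
  unfold stdNormalCDF
  exact ENNReal.toReal_mono (measure_ne_top _ _) (measure_mono (Set.Iic_subset_Iic.mpr h))

theorem variance_driven_pointwise_bound
    (μ₁ μ₂ σ₁ σ₂ : ℝ) (hμ : μ₂ < μ₁) (hσ₁ : 0 < σ₁) (hσ₂ : 0 < σ₂)
    (δ : ℝ) (hδ : δ = μ₁ - μ₂)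
    (N₀ T : ℕ) (hN₀ : 2 ≤ N₀) (hT : 2 * N₀ ≤ T)
    (n₁ : ℕ) (hn₁ : N₀ ≤ n₁) (hn₂ : n₁ ≤ T - N₀) :
    1 - stdNormalCDF (Real.sqrt (T : ℝ) * δ / (σ₁ + σ₂)) ≤
      1 - stdNormalCDF (δ / Real.sqrt
          (σ₁ ^ 2 / (n₁ : ℝ) + σ₂ ^ 2 / ((T : ℝ) - (n₁ : ℝ)))) := by
  have hδpos : 0 < δ := by rw [hδ]; linarith
  have hn₁T : n₁ + N₀ ≤ T := by omega
  have ha : (0:ℝ) < (n₁ : ℝ) := by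
    have : 0 < n₁ := by omega
    exact_mod_cast this
  have hb : (0:ℝ) < (T : ℝ) - (n₁ : ℝ) := by
    have : (n₁ : ℝ) + 2 ≤ (T : ℝ) := by exact_mod_cast (by omega : n₁ + 2 ≤ T)
    linarith
  set a : ℝ := (n₁ : ℝ) with ha'
  set b : ℝ := (T : ℝ) - (n₁ : ℝ) with hb'
  have hab : a + b = (T : ℝ) := by ring
  have hTpos : (0:ℝ) < (T : ℝ) := by linarith
  have hσ : 0 < σ₁ + σ₂ := by linarith
  have hS : (σ₁ + σ₂)^2 / (T : ℝ) ≤ σ₁ ^ 2 / a + σ₂ ^ 2 / b := by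
    rw [div_add_div _ _ (ne_of_gt ha) (ne_of_gt hb), div_le_div_iff₀ hTpos (by positivity),
      ← hab]
    nlinarith [sq_nonneg (σ₁ * b - σ₂ * a), mul_pos ha hb]
  have hSpos : 0 < σ₁ ^ 2 / a + σ₂ ^ 2 / b := by positivity
  have hsqrt2 : Real.sqrt ((σ₁ + σ₂)^2 / (T : ℝ)) = (σ₁ + σ₂) / Real.sqrt (T : ℝ) := by
    rw [Real.sqrt_div (sq_nonneg _), Real.sqrt_sq hσ.le]
  have hsqrt : (σ₁ + σ₂) / Real.sqrt (T : ℝ) ≤ Real.sqrt (σ₁ ^ 2 / a + σ₂ ^ 2 / b) := by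
    rw [← hsqrt2]
    exact Real.sqrt_le_sqrt hS
  have hkey : δ / Real.sqrt (σ₁ ^ 2 / a + σ₂ ^ 2 / b) ≤ Real.sqrt (T : ℝ) * δ / (σ₁ + σ₂) := by
    have h1 : δ / Real.sqrt (σ₁ ^ 2 / a + σ₂ ^ 2 / b) ≤ δ / ((σ₁ + σ₂) / Real.sqrt (T : ℝ)) := by
      apply div_le_div_of_nonneg_left hδpos.le (by positivity) hsqrt
    have h2 : δ / ((σ₁ + σ₂) / Real.sqrt (T : ℝ)) = Real.sqrt (T : ℝ) * δ / (σ₁ + σ₂) := by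
      field_simp
    linarith [h1, h2 ▸ h1]
  have := stdNormalCDF_mono hkey
  linarith
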